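/- (Relative entropy bound for perturbed states, first direction.) Let D be a positive definite density matrix on ℂ^n, let h be a Hermitian n×n matrix, and define the perturbed density matrix D^h = e^{log D + h}/Tr(e^{log D + h}). Then S(D^h | D) ≤ Tr(D^h h) − Tr(D h) ≤ 2‖h‖, where ‖·‖ is the operator norm. -/

import Mathlib

open scoped Kronecker ComplexOrder
open Matrix

noncomputable section

namespace TAL

/-- A density matrix: positive semidefinite with trace `1`. -/
def IsDensityMatrix {k : Type*} [Fintype k] [DecidableEq k] (D : Matrix k k ℂ) : Prop :=
  D.PosSemidef ∧ D.trace = 1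

/-- Functional calculus for Hermitian matrices via the spectral decomposition
(junk value `0` on non-Hermitian matrices). -/
def hermCalc {k : Type*} [Fintype k] [DecidableEq k] (f : ℝ → ℝ) (A : Matrix k k ℂ) :
    Matrix k k ℂ :=
  if hA : A.IsHermitian then
    (hA.eigenvectorUnitary : Matrix k k ℂ) *
      Matrix.diagonal (fun i => (f (hA.eigenvalues i) : ℂ)) *
        star (hA.eigenvectorUnitary : Matrix k k ℂ)
  else 0

/-- Matrix logarithm via the spectral decomposition. -/
def matLog {k : Type*} [Fintype k] [DecidableEq k] (A : Matrix k k ℂ) : Matrix k k ℂ :=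
  hermCalc Real.log A

/-- The von Neumann entropy `S(D) = -Tr (D log D)`, computed through the eigenvalues,
with the convention `0 * log 0 = 0` (junk value `0` on non-Hermitian matrices). -/
def vnEntropy {k : Type*} [Fintype k] [DecidableEq k] (A : Matrix k k ℂ) : ℝ :=
  if hA : A.IsHermitian then ∑ i, Real.negMulLog (hA.eigenvalues i) else 0

/-- The Umegaki relative entropy `S(D | E) = Tr (D (log D - log E))`. -/
def relEntropy {k : Type*} [Fintype k] [DecidableEq k] (D E : Matrix k k ℂ) : ℝ :=
  ((D * (matLog D - matLog E)).trace).re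

/-- Partial trace over the second (right) tensor factor. -/
def ptraceR {k₁ k₂ : Type*} [Fintype k₂] (D : Matrix (k₁ × k₂) (k₁ × k₂) ℂ) :
    Matrix k₁ k₁ ℂ :=
  Matrix.of fun i j => ∑ s : k₂, D (i, s) (j, s)

/-- Partial trace over the first (left) tensor factor. -/
def ptraceL {k₁ k₂ : Type*} [Fintype k₁] (D : Matrix (k₁ × k₂) (k₁ × k₂) ℂ) :
    Matrix k₂ k₂ ℂ :=
  Matrix.of fun i j => ∑ s : k₁, D (s, i) (s, j)

/-- The mutual entropy `I_D(A:B) = S(D_A) + S(D_B) - S(D)`. -/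
def mutualEntropy {k₁ k₂ : Type*} [Fintype k₁] [Fintype k₂] [DecidableEq k₁] [DecidableEq k₂]
    (D : Matrix (k₁ × k₂) (k₁ × k₂) ℂ) : ℝ :=
  vnEntropy (ptraceR D) + vnEntropy (ptraceL D) - vnEntropy D

/-- The Gibbs density matrix `e^{-β H} / Tr(e^{-β H})`. -/
def gibbs {k : Type*} [Fintype k] [DecidableEq k] (β : ℝ) (H : Matrix k k ℂ) :
    Matrix k k ℂ :=
  (NormedSpace.exp ((-(β : ℂ)) • H)).trace⁻¹ • NormedSpace.exp ((-(β : ℂ)) • H)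

/-- The free energy functional `F(D) = Tr(H D) - β⁻¹ S(D)` (real part of the trace). -/
def freeEnergy {k : Type*} [Fintype k] [DecidableEq k] (β : ℝ) (H D : Matrix k k ℂ) : ℝ :=
  ((H * D).trace).re - β⁻¹ * vnEntropy D

/-- The ℓ²-operator norm of a matrix. -/
def opNorm {k : Type*} [Fintype k] [DecidableEq k] (A : Matrix k k ℂ) : ℝ :=
  ‖(Matrix.toEuclideanCLM (𝕜 := ℂ) A : EuclideanSpace ℂ k →L[ℂ] EuclideanSpace ℂ k)‖

/-- The trace norm `‖X‖₁ = Tr ((X* X)^{1/2})`. -/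
def traceNorm {k : Type*} [Fintype k] [DecidableEq k] (X : Matrix k k ℂ) : ℝ :=
  (((Matrix.posSemidef_conjTranspose_mul_self X).isHermitian.eigenvectorUnitary : Matrix k k ℂ) *
    Matrix.diagonal (((↑) : ℝ → ℂ) ∘ Real.sqrt ∘
      (Matrix.posSemidef_conjTranspose_mul_self X).isHermitian.eigenvalues) *
    (star (Matrix.posSemidef_conjTranspose_mul_self X).isHermitian.eigenvectorUnitary :
      Matrix k k ℂ)).trace.re


/-- The perturbed density matrix `D^h = e^{log D + h} / Tr(e^{log D + h})`. -/
def pert {k : Type*} [Fintype k] [DecidableEq k] (D h : Matrix k k ℂ) : Matrix k k ℂ :=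
  (NormedSpace.exp (matLog D + h)).trace⁻¹ • NormedSpace.exp (matLog D + h)


variable {k : Type*} [Fintype k] [DecidableEq k]

/-- Conjugation by a unitary as an algebra homomorphism. -/
def conjAlgHom (U : Matrix.unitaryGroup k ℂ) : Matrix k k ℂ →ₐ[ℂ] Matrix k k ℂ where
  toFun A := (U : Matrix k k ℂ) * A * star (U : Matrix k k ℂ)
  map_one' := by show (U : Matrix k k ℂ) * 1 * star (U : Matrix k k ℂ) = 1; rw [mul_one]; exact Unitary.mul_star_self_of_mem U.2
  map_mul' A B := by
    show (U : Matrix k k ℂ) * (A * B) * star (U : Matrix k k ℂ) = _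
    have h1 : star (U : Matrix k k ℂ) * (U : Matrix k k ℂ) = 1 := Unitary.star_mul_self_of_mem U.2
    have : (U : Matrix k k ℂ) * A * star (U : Matrix k k ℂ) *
        ((U : Matrix k k ℂ) * B * star (U : Matrix k k ℂ)) =
        (U : Matrix k k ℂ) * A * (star (U : Matrix k k ℂ) * (U : Matrix k k ℂ)) *
          (B * star (U : Matrix k k ℂ)) := by noncomm_ring
    rw [this, h1, mul_one]; noncomm_ring
  map_zero' := by simp
  map_add' A B := by noncomm_ring
  commutes' c := by
    simp only [Algebra.algebraMap_eq_smul_one, mul_smul_comm, smul_mul_assoc, mul_one]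
    rw [Unitary.mul_star_self_of_mem U.2]

lemma aeval_conj (U : Matrix.unitaryGroup k ℂ) (B : Matrix k k ℂ) (q : Polynomial ℂ) :
    Polynomial.aeval ((U : Matrix k k ℂ) * B * star (U : Matrix k k ℂ)) q =
      (U : Matrix k k ℂ) * Polynomial.aeval B q * star (U : Matrix k k ℂ) :=
  (Polynomial.aeval_algHom_apply (conjAlgHom U) B q)

lemma aeval_diagonal (d : k → ℂ) (q : Polynomial ℂ) :
    Polynomial.aeval (Matrix.diagonal d) q =
      Matrix.diagonal (fun i => Polynomial.aeval (d i) q) := by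
  have h := Polynomial.aeval_algHom_apply (Matrix.diagonalAlgHom (n := k) (α := ℂ) ℂ) d q
  rw [Matrix.diagonalAlgHom_apply] at h
  rw [h, Matrix.diagonalAlgHom_apply]
  exact congrArg Matrix.diagonal (funext fun i => (Polynomial.aeval_algHom_apply (Pi.evalAlgHom ℂ (fun _ : k => ℂ) i) d q).symm)

variable {k : Type*} [Fintype k] [DecidableEq k]

lemma isHermitian_diagonal_ofReal (d : k → ℝ) :
    (Matrix.diagonal (fun i => (d i : ℂ))).IsHermitian :=
  Matrix.isHermitian_diagonal_of_self_adjoint _ (funext fun i => Complex.conj_ofReal (d i))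

lemma isHermitian_conj_diagonal (U : Matrix.unitaryGroup k ℂ) (d : k → ℝ) :
    ((U : Matrix k k ℂ) * Matrix.diagonal (fun i => (d i : ℂ)) *
      star (U : Matrix k k ℂ)).IsHermitian := by
  have := Matrix.isHermitian_mul_mul_conjTranspose (U : Matrix k k ℂ)
    (isHermitian_diagonal_ofReal d)
  simpa [Matrix.star_eq_conjTranspose] using this

/-- Functional calculus is well defined: it can be computed through any unitary
diagonalization with real diagonal. -/
lemma hermCalc_conj_diagonal' (f : ℝ → ℝ) (U : Matrix.unitaryGroup k ℂ) (d : k → ℝ)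
    (hB : ((U : Matrix k k ℂ) * Matrix.diagonal (fun i => (d i : ℂ)) *
      star (U : Matrix k k ℂ)).IsHermitian) :
    (hB.eigenvectorUnitary : Matrix k k ℂ) *
      Matrix.diagonal (fun i => (f (hB.eigenvalues i) : ℂ)) *
        star (hB.eigenvectorUnitary : Matrix k k ℂ) =
    (U : Matrix k k ℂ) * Matrix.diagonal (fun i => (f (d i) : ℂ)) *
      star (U : Matrix k k ℂ) := by
  cases isEmpty_or_nonempty k
  · apply Subsingleton.elim
  set B : Matrix k k ℂ := (U : Matrix k k ℂ) * Matrix.diagonal (fun i => (d i : ℂ)) *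
      star (U : Matrix k k ℂ) with hBdef
  set S : Finset ℝ := (Finset.image d Finset.univ) ∪ (Finset.image hB.eigenvalues Finset.univ)
    with hS
  have hinj : Set.InjOn id (S : Set ℝ) := Function.injective_id.injOn
  set p : Polynomial ℝ := Lagrange.interpolate S id f with hp
  set q : Polynomial ℂ := p.map (algebraMap ℝ ℂ) with hq
  have hqval : ∀ x ∈ S, Polynomial.aeval (x : ℂ) q = (f x : ℂ) := by
    intro x hx
    rw [hq, Polynomial.aeval_map_algebraMap,
      show ((x:ℂ)) = algebraMap ℝ ℂ x from rfl, Polynomial.aeval_algebraMap_apply]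
    have hev := Lagrange.eval_interpolate_at_node f hinj hx
    rw [← hp] at hev
    simp [Polynomial.coe_aeval_eq_eval, hev]
    exact hev
  -- two computations of aeval B q
  have h1 : Polynomial.aeval B q =
      (U : Matrix k k ℂ) * Matrix.diagonal (fun i => (f (d i) : ℂ)) * star (U : Matrix k k ℂ) := by
    rw [hBdef, aeval_conj, aeval_diagonal]
    have : (fun i => Polynomial.aeval ((d i : ℝ) : ℂ) q) = fun i => ((f (d i) : ℝ) : ℂ) :=
      funext fun i => hqval (d i)
        (Finset.mem_union_left _ (Finset.mem_image_of_mem d (Finset.mem_univ i)))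
    rw [this]
  have h2 : Polynomial.aeval B q =
      (hB.eigenvectorUnitary : Matrix k k ℂ) *
        Matrix.diagonal (fun i => (f (hB.eigenvalues i) : ℂ)) *
          star (hB.eigenvectorUnitary : Matrix k k ℂ) := by
    conv_lhs => rw [hB.spectral_theorem, Unitary.conjStarAlgAut_apply]
    rw [show (Matrix.diagonal (RCLike.ofReal ∘ hB.eigenvalues) : Matrix k k ℂ) =
      Matrix.diagonal (fun i => ((hB.eigenvalues i : ℝ) : ℂ)) from rfl]
    rw [aeval_conj, aeval_diagonal]
    have : (fun i => Polynomial.aeval ((hB.eigenvalues i : ℝ) : ℂ) q) =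
        fun i => ((f (hB.eigenvalues i) : ℝ) : ℂ) :=
      funext fun i => hqval (hB.eigenvalues i)
        (Finset.mem_union_right _ (Finset.mem_image_of_mem _ (Finset.mem_univ i)))
    rw [this]
  rw [← h2, h1]


-- scratch: extra lemmas for main proof
variable {k : Type*} [Fintype k] [DecidableEq k]

lemma trace_conj (U : Matrix.unitaryGroup k ℂ) (M : Matrix k k ℂ) :
    ((U : Matrix k k ℂ) * M * star (U : Matrix k k ℂ)).trace = M.trace := by
  rw [Matrix.trace_mul_cycle, Unitary.coe_star_mul_self, Matrix.one_mul]

lemma trace_diagonal_mul (c : k → ℂ) (M : Matrix k k ℂ) :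
    (Matrix.diagonal c * M).trace = ∑ i, c i * M i i := by
  simp [Matrix.trace, Matrix.diag, Matrix.mul_apply, Matrix.diagonal_apply,
    Finset.sum_ite_eq, Finset.mem_univ]

lemma sum_normSq_row (W : Matrix.unitaryGroup k ℂ) (i : k) :
    ∑ j, Complex.normSq ((W : Matrix k k ℂ) i j) = 1 := by
  have h1 : ((W : Matrix k k ℂ) * star (W : Matrix k k ℂ)) i i = 1 := by
    rw [Unitary.mul_star_self_of_mem W.2]; simp
  rw [Matrix.mul_apply] at h1
  have h2 : ((∑ j, Complex.normSq ((W : Matrix k k ℂ) i j) : ℝ) : ℂ) = 1 := by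
    push_cast
    rw [← h1]
    exact Finset.sum_congr rfl fun j _ => by
      rw [Matrix.star_apply, Complex.star_def]
      exact (Complex.mul_conj _).symm
  exact_mod_cast h2

lemma sum_normSq_col (W : Matrix.unitaryGroup k ℂ) (j : k) :
    ∑ i, Complex.normSq ((W : Matrix k k ℂ) i j) = 1 := by
  have h1 : ((star (W : Matrix k k ℂ)) * (W : Matrix k k ℂ)) j j = 1 := by
    rw [Unitary.coe_star_mul_self]; simp
  rw [Matrix.mul_apply] at h1
  have h2 : ((∑ i, Complex.normSq ((W : Matrix k k ℂ) i j) : ℝ) : ℂ) = 1 := by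
    push_cast
    rw [← h1]
    exact Finset.sum_congr rfl fun i _ => by
      rw [Matrix.star_apply, Complex.star_def]
      exact Complex.normSq_eq_conj_mul_self
  exact_mod_cast h2

/-- trace of a product of two unitarily-diagonalized matrices. -/
lemma trace_conj_mul_conj (U₁ U₂ : Matrix.unitaryGroup k ℂ) (c d : k → ℝ) :
    (((U₁ : Matrix k k ℂ) * Matrix.diagonal (fun i => (c i : ℂ)) * star (U₁ : Matrix k k ℂ)) *
     ((U₂ : Matrix k k ℂ) * Matrix.diagonal (fun i => (d i : ℂ)) * star (U₂ : Matrix k k ℂ))).trace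
    = ((∑ i, ∑ j, c i * d j *
        Complex.normSq ((star (U₁ : Matrix k k ℂ) * (U₂ : Matrix k k ℂ)) i j) : ℝ) : ℂ) := by
  set W : Matrix k k ℂ := star (U₁ : Matrix k k ℂ) * (U₂ : Matrix k k ℂ) with hW
  have hsW : star W = star (U₂ : Matrix k k ℂ) * (U₁ : Matrix k k ℂ) := by
    rw [hW, StarMul.star_mul, star_star]
  have key : ((U₁ : Matrix k k ℂ) * Matrix.diagonal (fun i => (c i : ℂ)) *
        star (U₁ : Matrix k k ℂ)) *
      ((U₂ : Matrix k k ℂ) * Matrix.diagonal (fun i => (d i : ℂ)) * star (U₂ : Matrix k k ℂ)) =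
      (U₁ : Matrix k k ℂ) *
        (Matrix.diagonal (fun i => (c i : ℂ)) * W * Matrix.diagonal (fun i => (d i : ℂ)) * star W)
          * star (U₁ : Matrix k k ℂ) := by
    conv_rhs => rw [hW, hsW]
    simp only [Matrix.mul_assoc]
    rw [show (U₁ : Matrix k k ℂ) * star (U₁ : Matrix k k ℂ) = 1 from
      Unitary.mul_star_self_of_mem U₁.2, Matrix.mul_one]
  rw [key, trace_conj]
  simp only [Matrix.mul_assoc]
  rw [trace_diagonal_mul]
  push_cast
  refine Finset.sum_congr rfl fun i _ => ?_
  have : (W * (Matrix.diagonal (fun i => (d i : ℂ)) * star W)) i i =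
      ∑ j, W i j * ((d j : ℂ) * star (W i j)) := by
    rw [Matrix.mul_apply]
    refine Finset.sum_congr rfl fun j _ => ?_
    rw [Matrix.mul_apply]
    rw [Finset.sum_eq_single j (fun b _ hb => by
      simp [Matrix.diagonal_apply_ne' _ hb]) (by simp)]
    simp [Matrix.diagonal_apply_eq, Matrix.star_apply]
  rw [this, Finset.mul_sum]
  refine Finset.sum_congr rfl fun j _ => ?_
  rw [Complex.star_def]
  have := Complex.mul_conj (W i j)
  calc (c i : ℂ) * (W i j * ((d j : ℂ) * (starRingEnd ℂ) (W i j)))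
      = (c i : ℂ) * (d j : ℂ) * (W i j * (starRingEnd ℂ) (W i j)) := by ring
    _ = (c i : ℂ) * (d j : ℂ) * (Complex.normSq (W i j) : ℂ) := by rw [Complex.mul_conj]


lemma trace_eq_sum_eigenvalues' {A : Matrix k k ℂ} (hA : A.IsHermitian) :
    A.trace = ∑ i, (hA.eigenvalues i : ℂ) := by
  conv_lhs => rw [hA.spectral_theorem, Unitary.conjStarAlgAut_apply]
  rw [trace_conj hA.eigenvectorUnitary, Matrix.trace_diagonal]
  rfl

lemma diag_entry_le_opNorm (h : Matrix k k ℂ) (v : k → ℂ)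
    (hv : ∑ a, Complex.normSq (v a) = 1) :
    ‖star v ⬝ᵥ (h *ᵥ v)‖ ≤ opNorm h := by
  set x : EuclideanSpace ℂ k := (WithLp.equiv 2 _).symm v with hx
  have hTx : (Matrix.toEuclideanCLM (𝕜 := ℂ) h) x = (WithLp.equiv 2 _).symm (h *ᵥ v) :=
    Matrix.toEuclideanCLM_toLp h v
  have hinner : (inner ℂ x ((Matrix.toEuclideanCLM (𝕜 := ℂ) h) x) : ℂ) = star v ⬝ᵥ (h *ᵥ v) := by
    rw [hTx]
    simp [PiLp.inner_apply, dotProduct, hx, mul_comm]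
  have hxnorm : ‖x‖ = 1 := by
    rw [EuclideanSpace.norm_eq]
    have : ∀ a, ‖x a‖ ^ 2 = Complex.normSq (v a) := fun a => by
      rw [show x a = v a from rfl, ← Complex.sq_norm]
    simp only [this, hv, Real.sqrt_one]
  calc ‖star v ⬝ᵥ (h *ᵥ v)‖ = ‖(inner ℂ x ((Matrix.toEuclideanCLM (𝕜 := ℂ) h) x) : ℂ)‖ := by
        rw [hinner]
    _ ≤ ‖x‖ * ‖(Matrix.toEuclideanCLM (𝕜 := ℂ) h) x‖ := norm_inner_le_norm _ _
    _ ≤ ‖x‖ * (opNorm h * ‖x‖) :=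
        mul_le_mul_of_nonneg_left ((Matrix.toEuclideanCLM (𝕜 := ℂ) h).le_opNorm x)
          (norm_nonneg _)
    _ = opNorm h := by rw [hxnorm]; ring

lemma re_trace_mul_le (ρ h : Matrix k k ℂ) (hρ : ρ.PosSemidef) (htr : ρ.trace = 1) :
    |((ρ * h).trace).re| ≤ opNorm h := by
  have hH := hρ.1
  set V := hH.eigenvectorUnitary with hV
  set q := hH.eigenvalues with hq
  have hq0 : ∀ i, 0 ≤ q i := hρ.eigenvalues_nonneg
  have htrace_eig : ∑ i, q i = 1 := by
    have h1 := (trace_eq_sum_eigenvalues' hH).symm.trans htr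
    exact_mod_cast (by push_cast at h1 ⊢; simpa using h1 : ((∑ i, q i : ℝ) : ℂ) = 1)
  set M : Matrix k k ℂ := star (V : Matrix k k ℂ) * h * (V : Matrix k k ℂ) with hM
  have hexp : (ρ * h).trace = ∑ i, (q i : ℂ) * M i i := by
    conv_lhs => rw [hH.spectral_theorem, Unitary.conjStarAlgAut_apply]
    rw [Matrix.mul_assoc ((V : Matrix k k ℂ) * _), Matrix.trace_mul_comm, ← Matrix.mul_assoc,
      Matrix.trace_mul_comm, trace_diagonal_mul]
    rfl
  -- each diagonal entry of M is a quadratic form value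
  have hMdiag : ∀ i, ‖M i i‖ ≤ opNorm h := by
    intro i
    have hcol : ∑ a, Complex.normSq ((V : Matrix k k ℂ) a i) = 1 := by
      have h1 : (star (V : Matrix k k ℂ) * (V : Matrix k k ℂ)) i i = 1 := by
        rw [Unitary.coe_star_mul_self]; simp
      rw [Matrix.mul_apply] at h1
      have h2 : ((∑ a, Complex.normSq ((V : Matrix k k ℂ) a i) : ℝ) : ℂ) = 1 := by
        push_cast
        rw [← h1]
        exact Finset.sum_congr rfl fun a _ => by
          rw [Matrix.star_apply, Complex.star_def]
          exact Complex.normSq_eq_conj_mul_self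
      exact_mod_cast h2
    have hform : M i i = star (fun a => (V : Matrix k k ℂ) a i) ⬝ᵥ
        (h *ᵥ fun a => (V : Matrix k k ℂ) a i) := by
      simp only [hM, Matrix.mul_apply, dotProduct, Matrix.mulVec, Matrix.star_apply,
        Pi.star_apply, dotProduct]
      simp only [Finset.sum_mul, Finset.mul_sum]
      rw [Finset.sum_comm]
      exact Finset.sum_congr rfl fun a _ => Finset.sum_congr rfl fun b _ => by ring
    rw [hform]
    exact diag_entry_le_opNorm h _ hcol
  rw [hexp]
  have : ((∑ i, (q i : ℂ) * M i i).re) = ∑ i, q i * (M i i).re := by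
    rw [Complex.re_sum]
    exact Finset.sum_congr rfl fun i _ => by
      simp [Complex.mul_re, Complex.ofReal_re, Complex.ofReal_im]
  rw [this]
  calc |∑ i, q i * (M i i).re| ≤ ∑ i, |q i * (M i i).re| := Finset.abs_sum_le_sum_abs _ _
    _ ≤ ∑ i, q i * opNorm h := by
        refine Finset.sum_le_sum fun i _ => ?_
        rw [abs_mul, abs_of_nonneg (hq0 i)]
        exact mul_le_mul_of_nonneg_left
          ((Complex.abs_re_le_norm _).trans (hMdiag i))
          (hq0 i)
    _ = opNorm h := by rw [← Finset.sum_mul, htrace_eig, one_mul]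



lemma key_scalar {m : Type*} [Fintype m] [Nonempty m] (p : m → ℝ) (s : m → m → ℝ) (μ : m → ℝ)
    (hp : ∀ i, 0 < p i) (hps : ∑ i, p i = 1)
    (hs : ∀ i j, 0 ≤ s i j) (hrow : ∀ i, ∑ j, s i j = 1) (hcol : ∀ j, ∑ i, s i j = 1) :
    ∑ i, ∑ j, p i * (s i j * μ j) - ∑ i, p i * Real.log (p i) ≤
      Real.log (∑ j, Real.exp (μ j)) := by
  set a : m → ℝ := fun i => ∑ j, s i j * μ j with ha
  have e1 : ∀ i, Real.exp (a i) ≤ ∑ j, s i j * Real.exp (μ j) := by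
    intro i
    have := convexOn_exp.map_sum_le (t := Finset.univ) (w := s i) (p := μ)
      (fun j _ => hs i j) (hrow i) (fun j _ => Set.mem_univ _)
    simpa [ha, smul_eq_mul] using this
  have e2 : ∑ i, Real.exp (a i) ≤ ∑ j, Real.exp (μ j) := by
    calc ∑ i, Real.exp (a i) ≤ ∑ i, ∑ j, s i j * Real.exp (μ j) :=
          Finset.sum_le_sum fun i _ => e1 i
      _ = ∑ j, (∑ i, s i j) * Real.exp (μ j) := by
          rw [Finset.sum_comm]
          exact Finset.sum_congr rfl fun j _ => (Finset.sum_mul _ _ _).symm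
      _ = ∑ j, Real.exp (μ j) := by simp [hcol]
  have e3 : ∑ i, p i * Real.log (Real.exp (a i) / p i) ≤
      Real.log (∑ i, p i * (Real.exp (a i) / p i)) := by
    have := (strictConcaveOn_log_Ioi.concaveOn).le_map_sum (t := Finset.univ)
      (w := p) (p := fun i => Real.exp (a i) / p i)
      (fun i _ => (hp i).le) hps
      (fun i _ => Set.mem_Ioi.mpr (div_pos (Real.exp_pos _) (hp i)))
    simpa [smul_eq_mul] using this
  have e4 : ∑ i, p i * (Real.exp (a i) / p i) = ∑ i, Real.exp (a i) :=
    Finset.sum_congr rfl fun i _ => by rw [mul_div_cancel₀ _ (hp i).ne']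
  have e5 : ∀ i, p i * Real.log (Real.exp (a i) / p i) = p i * a i - p i * Real.log (p i) := by
    intro i
    rw [Real.log_div (Real.exp_ne_zero _) (hp i).ne', Real.log_exp, mul_sub]
  calc ∑ i, ∑ j, p i * (s i j * μ j) - ∑ i, p i * Real.log (p i)
      = ∑ i, p i * Real.log (Real.exp (a i) / p i) := by
        rw [← Finset.sum_sub_distrib]
        refine Finset.sum_congr rfl fun i _ => ?_
        rw [e5 i, ha]
        simp [Finset.mul_sum]
    _ ≤ Real.log (∑ i, p i * (Real.exp (a i) / p i)) := e3
    _ = Real.log (∑ i, Real.exp (a i)) := by rw [e4]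
    _ ≤ Real.log (∑ j, Real.exp (μ j)) := by
        apply Real.log_le_log _ e2
        exact Finset.sum_pos (fun i _ => Real.exp_pos _) Finset.univ_nonempty



lemma hermCalc_conj_diag {k : Type*} [Fintype k] [DecidableEq k]
    (f : ℝ → ℝ) (U : Matrix.unitaryGroup k ℂ) (d : k → ℝ) :
    hermCalc f ((U : Matrix k k ℂ) * Matrix.diagonal (fun i => (d i : ℂ)) *
        star (U : Matrix k k ℂ)) =
      (U : Matrix k k ℂ) * Matrix.diagonal (fun i => (f (d i) : ℂ)) *
        star (U : Matrix k k ℂ) := by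
  unfold hermCalc
  rw [dif_pos (isHermitian_conj_diagonal U d)]
  exact hermCalc_conj_diagonal' f U d _

/-- relative entropy bound for perturbed states, first direction. -/
theorem relEntropy_pert_left {n : ℕ}
    (D : Matrix (Fin n) (Fin n) ℂ) (hD : D.PosDef) (hDtr : D.trace = 1)
    (h : Matrix (Fin n) (Fin n) ℂ) (hh : h.IsHermitian) :
    relEntropy (pert D h) D ≤ ((pert D h * h).trace).re - ((D * h).trace).re ∧
    ((pert D h * h).trace).re - ((D * h).trace).re ≤ 2 * opNorm h := by
  rcases Nat.eq_zero_or_pos n with hn | hn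
  · subst hn
    have h0 : ∀ (A : Matrix (Fin 0) (Fin 0) ℂ), A.trace = 0 := fun A => by
      simp [Matrix.trace]
    have hop : 0 ≤ opNorm h := norm_nonneg _
    constructor
    · simp [relEntropy, h0]
    · rw [h0, h0]
      simpa using by linarith
  haveI : Nonempty (Fin n) := Fin.pos_iff_nonempty.mp hn
  have hDH : D.IsHermitian := hD.1
  set U₀ := hDH.eigenvectorUnitary with hU₀
  set lam := hDH.eigenvalues with hlam
  have hlampos : ∀ i, 0 < lam i := fun i => hD.eigenvalues_pos i
  have hlamsum : ∑ i, lam i = 1 := by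
    have h1 := (trace_eq_sum_eigenvalues' hDH).symm.trans hDtr
    exact_mod_cast (by push_cast at h1 ⊢; simpa using h1 : ((∑ i, lam i : ℝ) : ℂ) = 1)
  have hDspec : D = (U₀ : Matrix (Fin n) (Fin n) ℂ) * Matrix.diagonal (fun i => (lam i : ℂ)) *
      star (U₀ : Matrix (Fin n) (Fin n) ℂ) := hDH.spectral_theorem
  have hLdef : matLog D = (U₀ : Matrix (Fin n) (Fin n) ℂ) *
      Matrix.diagonal (fun i => ((Real.log (lam i) : ℝ) : ℂ)) *
        star (U₀ : Matrix (Fin n) (Fin n) ℂ) := by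
    unfold matLog hermCalc
    rw [dif_pos hDH]
  have hL : (matLog D).IsHermitian := by
    rw [hLdef]; exact isHermitian_conj_diagonal U₀ _
  have hA : (matLog D + h).IsHermitian := hL.add hh
  set U := hA.eigenvectorUnitary with hU
  set μ := hA.eigenvalues with hμ
  have hAspec : matLog D + h = (U : Matrix (Fin n) (Fin n) ℂ) *
      Matrix.diagonal (fun i => (μ i : ℂ)) * star (U : Matrix (Fin n) (Fin n) ℂ) :=
    hA.spectral_theorem
  set Z : ℝ := ∑ i, Real.exp (μ i) with hZ
  have hZpos : 0 < Z := Finset.sum_pos (fun i _ => Real.exp_pos _) Finset.univ_nonempty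
  have hexpA : NormedSpace.exp (matLog D + h) = (U : Matrix (Fin n) (Fin n) ℂ) *
      Matrix.diagonal (fun i => ((Real.exp (μ i) : ℝ) : ℂ)) *
        star (U : Matrix (Fin n) (Fin n) ℂ) := by
    have hUunit : IsUnit (U : Matrix (Fin n) (Fin n) ℂ) :=
      ⟨⟨(U : Matrix (Fin n) (Fin n) ℂ), star (U : Matrix (Fin n) (Fin n) ℂ),
        Unitary.mul_star_self_of_mem U.2, Unitary.star_mul_self_of_mem U.2⟩, rfl⟩
    have hUinv : (U : Matrix (Fin n) (Fin n) ℂ)⁻¹ = star (U : Matrix (Fin n) (Fin n) ℂ) :=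
      Matrix.inv_eq_left_inv (Unitary.star_mul_self_of_mem U.2)
    rw [hAspec, ← hUinv, Matrix.exp_conj _ _ hUunit, Matrix.exp_diagonal, hUinv]
    have hfun : NormedSpace.exp (fun i => ((μ i : ℝ) : ℂ)) =
        fun i => ((Real.exp (μ i) : ℝ) : ℂ) := by
      rw [Pi.exp_def]
      funext i
      rw [← Complex.exp_eq_exp_ℂ, ← Complex.ofReal_exp]
    rw [hfun]
  have htrexp : (NormedSpace.exp (matLog D + h)).trace = (Z : ℂ) := by
    rw [hexpA, trace_conj, Matrix.trace_diagonal, hZ]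
    push_cast
    rfl
  set c : ℝ := Real.log Z with hc
  have hpertd : pert D h = (U : Matrix (Fin n) (Fin n) ℂ) *
      Matrix.diagonal (fun i => ((Real.exp (μ i) / Z : ℝ) : ℂ)) *
        star (U : Matrix (Fin n) (Fin n) ℂ) := by
    have hdfun : ((Z:ℂ)⁻¹ • fun i => ((Real.exp (μ i) : ℝ) : ℂ)) =
        fun i => ((Real.exp (μ i) / Z : ℝ) : ℂ) := by
      funext i
      simp only [Pi.smul_apply, smul_eq_mul]
      push_cast
      ring
    rw [pert, htrexp, hexpA, ← smul_mul_assoc, ← mul_smul_comm, ← Matrix.diagonal_smul, hdfun]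
  have hpertPSD : (pert D h).PosSemidef := by
    rw [hpertd]
    have hd : (Matrix.diagonal (fun i => ((Real.exp (μ i) / Z : ℝ) : ℂ))).PosSemidef :=
      Matrix.posSemidef_diagonal_iff.mpr fun i => by
        have : (0:ℝ) ≤ Real.exp (μ i) / Z := le_of_lt (div_pos (Real.exp_pos _) hZpos)
        exact_mod_cast this
    have := hd.mul_mul_conjTranspose_same (U : Matrix (Fin n) (Fin n) ℂ)
    simpa [Matrix.star_eq_conjTranspose] using this
  have hperttr : (pert D h).trace = 1 := by
    rw [hpertd, trace_conj, Matrix.trace_diagonal]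
    have h1 : ∑ i, ((Real.exp (μ i) / Z : ℝ) : ℂ) = ((∑ i, Real.exp (μ i) / Z : ℝ) : ℂ) := by
      push_cast; rfl
    rw [h1, ← Finset.sum_div, ← hZ, div_self hZpos.ne', Complex.ofReal_one]
  have hlogpert : matLog (pert D h) = (matLog D + h) - (c : ℂ) • 1 := by
    rw [hpertd, show (matLog (((U : Matrix (Fin n) (Fin n) ℂ) *
      Matrix.diagonal (fun i => ((Real.exp (μ i) / Z : ℝ) : ℂ)) *
        star (U : Matrix (Fin n) (Fin n) ℂ)))) = _ from hermCalc_conj_diag Real.log U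
          (fun i => Real.exp (μ i) / Z)]
    have hlogv : (fun i => ((Real.log (Real.exp (μ i) / Z) : ℝ) : ℂ)) =
        fun i => ((μ i : ℂ) - (c : ℂ)) := by
      funext i
      rw [Real.log_div (Real.exp_pos _).ne' hZpos.ne', Real.log_exp]
      push_cast
      ring
    rw [hlogv]
    have hdiag : Matrix.diagonal (fun i => ((μ i : ℂ) - (c : ℂ))) =
        Matrix.diagonal (fun i => (μ i : ℂ)) - (c : ℂ) • 1 := by
      ext i j
      rcases eq_or_ne i j with rfl | hij
      · simp [Matrix.diagonal_apply_eq, Matrix.one_apply_eq]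
      · simp [Matrix.diagonal_apply_ne _ hij, Matrix.one_apply_ne hij]
    rw [hdiag, Matrix.mul_sub, Matrix.sub_mul, ← hAspec]
    congr 1
    rw [mul_smul_comm, Matrix.mul_one, smul_mul_assoc, Unitary.mul_star_self_of_mem U.2]
  have hrel : relEntropy (pert D h) D = ((pert D h * h).trace).re - c := by
    have hre : relEntropy (pert D h) D =
        ((pert D h * (matLog (pert D h) - matLog D)).trace).re := rfl
    rw [hre, hlogpert]
    have h1 : matLog D + h - (c : ℂ) • 1 - matLog D = h - (c : ℂ) • 1 := by
      rw [sub_right_comm, add_sub_cancel_left]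
    rw [h1, Matrix.mul_sub, Matrix.trace_sub, mul_smul_comm, Matrix.mul_one,
      Matrix.trace_smul, hperttr, smul_eq_mul, mul_one]
    simp [Complex.sub_re, Complex.ofReal_re]
  -- compute Re Tr(D h)
  set W : Matrix.unitaryGroup (Fin n) ℂ := star U₀ * U with hWu
  have hWcoe : (W : Matrix (Fin n) (Fin n) ℂ) =
      star (U₀ : Matrix (Fin n) (Fin n) ℂ) * (U : Matrix (Fin n) (Fin n) ℂ) := rfl
  have hDhtrace : ((D * h).trace).re =
      (∑ i, ∑ j, lam i * μ j * Complex.normSq ((W : Matrix (Fin n) (Fin n) ℂ) i j)) -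
        ∑ i, lam i * Real.log (lam i) := by
    have hh' : D * h = D * (matLog D + h) - D * matLog D := by
      rw [← Matrix.mul_sub, add_sub_cancel_left]
    have h1 : (D * (matLog D + h)).trace =
        ((∑ i, ∑ j, lam i * μ j * Complex.normSq ((W : Matrix (Fin n) (Fin n) ℂ) i j) : ℝ) : ℂ) := by
      rw [hAspec, hDspec, trace_conj_mul_conj U₀ U lam μ, hWcoe]
    have h2 : (D * matLog D).trace = ((∑ i, lam i * Real.log (lam i) : ℝ) : ℂ) := by
      rw [hLdef, hDspec, trace_conj_mul_conj U₀ U₀ lam (fun i => Real.log (lam i))]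
      rw [Unitary.star_mul_self_of_mem U₀.2]
      congr 1
      refine Finset.sum_congr rfl fun i _ => ?_
      rw [Finset.sum_eq_single i (fun j _ hj => by
        simp [Matrix.one_apply_ne' hj]) (by simp)]
      simp [Matrix.one_apply_eq]
    rw [hh', Matrix.trace_sub, h1, h2, Complex.sub_re, Complex.ofReal_re, Complex.ofReal_re]
  have hfirst : ((D * h).trace).re ≤ c := by
    rw [hDhtrace, hc, hZ]
    have hks := key_scalar lam (fun i j => Complex.normSq ((W : Matrix (Fin n) (Fin n) ℂ) i j)) μ
      hlampos hlamsum (fun i j => Complex.normSq_nonneg _) (sum_normSq_row W) (sum_normSq_col W)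
    calc (∑ i, ∑ j, lam i * μ j * Complex.normSq ((W : Matrix (Fin n) (Fin n) ℂ) i j)) -
          ∑ i, lam i * Real.log (lam i)
        = ∑ i, ∑ j, lam i * (Complex.normSq ((W : Matrix (Fin n) (Fin n) ℂ) i j) * μ j) -
          ∑ i, lam i * Real.log (lam i) := by
          congr 1
          exact Finset.sum_congr rfl fun i _ => Finset.sum_congr rfl fun j _ => by ring
      _ ≤ Real.log (∑ j, Real.exp (μ j)) := hks
  have hpert_bound : |((pert D h * h).trace).re| ≤ opNorm h :=
    re_trace_mul_le _ h hpertPSD hperttr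
  have hD_bound : |((D * h).trace).re| ≤ opNorm h :=
    re_trace_mul_le D h hD.posSemidef hDtr
  constructor
  · rw [hrel]
    linarith
  · have h1 := (abs_le.mp hpert_bound).2
    have h2 := (abs_le.mp hD_bound).1
    linarith

end TAL
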